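/- arXiv:1007.3515 — 2 statements merged into one kernel-verified Lean document; each statement's English description precedes it below -/
import Mathlib

section
/- The limits of the alternating fixpoint construction satisfy P_ω = Γ(N_ω) and N_ω = Γ'(P_ω), where the sequences stabilize after finitely many steps. -/
lemma mono_stabilizes {A : Type} [Finite A] (f : ℕ →o Set A) :
    ∃ n, ∀ m, n ≤ m → f m = f n := by
  have : WellFounded ((· > ·) : Set A → Set A → Prop) :=
    Finite.to_wellFoundedGT.wf
  obtain ⟨n, hn⟩ := wellFoundedGT_iff_monotone_chain_condition.1 ⟨this⟩ f
  exact ⟨n, fun m hm => (hn m hm).symm⟩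

/-- The limits of the alternating fixpoint construction satisfy
P_ω = Γ(N_ω) and N_ω = Γ'(P_ω). -/
theorem alternating_limits_fixpoint {A : Type} [Finite A] (KA : Set A)
    (Γ Γ' : Set A → Set A)
    (hΓ : ∀ S S', S ⊆ S' → Γ S' ⊆ Γ S)
    (hΓ' : ∀ S S', S ⊆ S' → Γ' S' ⊆ Γ' S)
    (hΓKA : ∀ S, Γ S ⊆ KA) (hΓ'KA : ∀ S, Γ' S ⊆ KA)
    (Pseq Nseq : ℕ → Set A)
    (hP0 : Pseq 0 = ∅) (hN0 : Nseq 0 = KA)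
    (hPs : ∀ n, Pseq (n + 1) = Γ (Nseq n))
    (hNs : ∀ n, Nseq (n + 1) = Γ' (Pseq n)) :
    (⋃ i, Pseq i) = Γ (⋂ i, Nseq i) ∧ (⋂ i, Nseq i) = Γ' (⋃ i, Pseq i) := by
  -- basic step monotonicity
  have step : ∀ n, Pseq n ⊆ Pseq (n + 1) ∧ Nseq (n + 1) ⊆ Nseq n := by
    intro n
    induction n with
    | zero =>
      constructor
      · rw [hP0]; exact Set.empty_subset _
      · rw [hNs 0, hN0]; exact hΓ'KA _
    | succ k ih =>
      constructor
      · rw [hPs k, hPs (k + 1)]; exact hΓ _ _ ih.2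
      · rw [hNs k, hNs (k + 1)]; exact hΓ' _ _ ih.1
  have Pmono : Monotone Pseq :=
    monotone_nat_of_le_succ fun n => (step n).1
  have Nanti : Antitone Nseq :=
    antitone_nat_of_succ_le fun n => (step n).2
  obtain ⟨n₁, hn₁⟩ := mono_stabilizes ⟨Pseq, Pmono⟩
  obtain ⟨n₂, hn₂⟩ := mono_stabilizes ⟨fun n => (Nseq n)ᶜ, fun a b h => Set.compl_subset_compl.2 (Nanti h)⟩
  set n := max n₁ n₂ with hn
  have hPstab : ∀ m, n ≤ m → Pseq m = Pseq n := by
    intro m hm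
    have := hn₁ m (le_trans (le_max_left _ _) hm)
    have h2 := hn₁ n (le_max_left _ _)
    simp only [OrderHom.coe_mk] at this h2
    rw [this, h2]
  have hNstab : ∀ m, n ≤ m → Nseq m = Nseq n := by
    intro m hm
    have := hn₂ m (le_trans (le_max_right _ _) hm)
    have h2 := hn₂ n (le_max_right _ _)
    have : (Nseq m)ᶜ = (Nseq n)ᶜ := this.trans h2.symm
    exact compl_injective this
  have hU : (⋃ i, Pseq i) = Pseq n := by
    apply subset_antisymm
    · apply Set.iUnion_subset; intro i
      rcases le_or_gt i n with h | h
      · exact Pmono h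
      · rw [hPstab i h.le]
    · exact Set.subset_iUnion _ n
  have hI : (⋂ i, Nseq i) = Nseq n := by
    apply subset_antisymm
    · exact Set.iInter_subset _ n
    · apply Set.subset_iInter; intro i
      rcases le_or_gt i n with h | h
      · exact Nanti h
      · rw [hNstab i h.le]
  constructor
  · rw [hU, hI, ← hPs n, hPstab (n + 1) (Nat.le_succ n)]
  · rw [hU, hI, ← hNs n, hNstab (n + 1) (Nat.le_succ n)]
end

section
/- The union of an arbitrary family of unfounded sets of K with respect to (T,F) is itself an unfounded set of K with respect to (T,F); hence the greatest unfounded set U_K(T,F) exists and is an unfounded set. -/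
/-- A ground MKNF rule: head atom, positive body atoms, negative body atoms. -/
structure MRule (Atom : Type) where
  head : Atom
  pos : Finset Atom
  neg : Finset Atom

/-- U ⊆ KA is an unfounded set of K w.r.t. (T,F): each H ∈ U satisfies (Ui):
every rule with head H has (Uia) a positive body atom in U ∪ F, or (Uib) a
negative body atom in T, or (Uic) OB_{O,T} ⊨ ¬H; and (Uii): every minimal
consistent S ⊆ KA with OB_{O,S} ⊨ H contains an atom A ∈ U ∪ F whose removal
breaks the entailment. Here `entailsPos S H` stands for OB_{O,S} ⊨ H,
`entailsNeg T H` for OB_{O,T} ⊨ ¬H, and `consistent S` for consistency of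
OB_{O,S}. -/
def IsUnfounded {Atom : Type} (P : Finset (MRule Atom)) (KA : Set Atom)
    (entailsPos : Set Atom → Atom → Prop)
    (entailsNeg : Set Atom → Atom → Prop)
    (consistent : Set Atom → Prop)
    (T F U : Set Atom) : Prop :=
  U ⊆ KA ∧ ∀ H ∈ U,
    (∀ r ∈ P, r.head = H →
      ((∃ A ∈ r.pos, A ∈ U ∪ F) ∨ (∃ B ∈ r.neg, B ∈ T) ∨ entailsNeg T H)) ∧
    (∀ S ⊆ KA, entailsPos S H → (∀ S' ⊂ S, ¬ entailsPos S' H) →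
      consistent S → ∃ A, ¬ entailsPos (S \ {A}) H ∧ A ∈ U ∪ F)

/-- The union of an arbitrary family of unfounded sets w.r.t. (T,F) is itself
unfounded w.r.t. (T,F); hence the union of all unfounded sets — the greatest
unfounded set U_K(T,F) — is an unfounded set containing every unfounded set. -/
theorem unfounded_union {Atom : Type} (P : Finset (MRule Atom)) (KA : Set Atom)
    (entailsPos : Set Atom → Atom → Prop)
    (entailsNeg : Set Atom → Atom → Prop)
    (consistent : Set Atom → Prop)
    (T F : Set Atom) :
    (∀ (I : Type) (f : I → Set Atom),
      (∀ i, IsUnfounded P KA entailsPos entailsNeg consistent T F (f i)) →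
      IsUnfounded P KA entailsPos entailsNeg consistent T F (⋃ i, f i)) ∧
    IsUnfounded P KA entailsPos entailsNeg consistent T F
      (⋃₀ {U | IsUnfounded P KA entailsPos entailsNeg consistent T F U}) ∧
    (∀ U, IsUnfounded P KA entailsPos entailsNeg consistent T F U →
      U ⊆ ⋃₀ {U | IsUnfounded P KA entailsPos entailsNeg consistent T F U}) := by

  have key : ∀ (I : Type) (f : I → Set Atom),
      (∀ i, IsUnfounded P KA entailsPos entailsNeg consistent T F (f i)) →
      IsUnfounded P KA entailsPos entailsNeg consistent T F (⋃ i, f i) := by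
    intro I f hf
    constructor
    · intro x hx
      obtain ⟨_, ⟨i, rfl⟩, hxi⟩ := hx
      exact (hf i).1 hxi
    · intro H hH
      obtain ⟨_, ⟨i, rfl⟩, hHi⟩ := hH
      obtain ⟨h1, h2⟩ := (hf i).2 H hHi
      constructor
      · intro r hr hhead
        rcases h1 r hr hhead with ⟨A, hA, hAU⟩ | h | h
        · exact Or.inl ⟨A, hA, hAU.imp (fun h => Set.mem_iUnion.2 ⟨i, h⟩) id⟩
        · exact Or.inr (Or.inl h)
        · exact Or.inr (Or.inr h)
      · intro S hS hent hmin hcons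
        obtain ⟨A, hA1, hA2⟩ := h2 S hS hent hmin hcons
        exact ⟨A, hA1, hA2.imp (fun h => Set.mem_iUnion.2 ⟨i, h⟩) id⟩
  refine ⟨key, ?_, ?_⟩
  · rw [Set.sUnion_eq_iUnion]
    exact key _ _ (fun i => i.2)
  · exact fun U hU x hx => ⟨U, hU, hx⟩
end
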